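/- Consider the CABC system (1.5) for the dKdV equation: equations (u - v)*((B - a)/u + vt) - B + g = 0 (B-equation) and (B - a)/u - (g - a)/v - ub + vb = 0 (C-equation), where v-variables are computed: from the C-equation, vb is a fractional linear function of v; together with the B-equation shifted appropriately and the dKdV equation ubt - u = (B' - a)/ut - (B - A)/ub and S-equation u - vbt - (B - A)/ub + (g - a)/vt = 0, the value vbt computed in the three cube ways coincides. In particular: given generic initial values u, ub, ut, v ∈ ℂ, the value vbt obtained by (i) solving S for vbt after computing vt from B, (ii) solving the l-shifted B-equation for vbt after computing vb from C, and (iii) solving the m-shifted C-equation after computing ubt from the dKdV equation and vt from B, is the same rational function of (u, ub, ut, v). -/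

import Mathlib

/-- Consistency around a broken cube for the CABC system (1.5) of the dKdV
equation: given generic initial values `u, ub, ut, v`, the value `vbt`
obtained by the three computation paths (via S after B, via the `l`-shifted B
after C, via the `m`-shifted C after the dKdV equation and B) is the same. -/
theorem dKdV_CABC_I_consistency
    (u ub ut ubt v vb vt a A B B' g : ℂ)
    (hu : u ≠ 0) (hub : ub ≠ 0) (hut : ut ≠ 0) (hv : v ≠ 0)
    (hvt : vt ≠ 0) (hvb : vb ≠ 0)
    (huv : u - v ≠ 0) (hubvb : ub - vb ≠ 0)
    (hBeq : vt = (B - g) / (u - v) - (B - a) / u)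
    (hCeq : vb = ub + (g - a) / v - (B - a) / u)
    (hAeq : ubt = u + (B' - a) / ut - (B - A) / ub) :
    (u - (B - A) / ub + (g - a) / vt = (B - g) / (ub - vb) - (B - A) / ub) ∧
    (u - (B - A) / ub + (g - a) / vt = ubt + (g - a) / vt - (B' - a) / ut) := by
  constructor
  · have hvt' : vt * (u * (u - v)) = u * (a - g) + v * (B - a) := by
      rw [hBeq]; field_simp; ring
    have hd : (ub - vb) * (u * v) = v * (B - a) + u * (a - g) := by
      rw [hCeq]; field_simp; ring
    have hne : u * u * v * (u - v) ≠ 0 :=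
      mul_ne_zero (mul_ne_zero (mul_ne_zero hu hu) hv) huv
    have key3 : ((u * vt + (g - a)) * (ub - vb)) * (u * u * v * (u - v)) =
        ((B - g) * vt) * (u * u * v * (u - v)) := by
      linear_combination ((u*vt+(g-a))*u*(u-v)) * hd +
        (u*(u*(a-g)+v*(B-a)) - (B-g)*u*v) * hvt'
    have key2 : ((u + (g - a) / vt) * (ub - vb)) * (u * u * v * (u - v)) =
        (B - g) * (u * u * v * (u - v)) := by
      field_simp
      linear_combination mul_right_cancel₀ hne key3
    have key : u + (g - a) / vt = (B - g) / (ub - vb) := by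
      rw [eq_div_iff hubvb]
      exact mul_right_cancel₀ hne key2
    linear_combination key
  · subst hAeq; ring
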